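/- Let 𝓗 be a real Hilbert space with norm ‖·‖, let c₁ > 0, c₃ > 0, δ > 0, and let (uₙ)_{n≥0} be a sequence in 𝓗 such that for every n ≥ 0, (1/(2δ)) Σ_{j=0}^{n} ‖u_{j+1} - u_j‖² ≤ c₃ e^{16 c₁ n δ}. Define A^δ : [0,∞) → 𝓗 by A^δ(t) := (uₙ - u_{n-1})/δ for t ∈ [nδ, (n+1)δ) with n ≥ 1, and A^δ(t) := 0 for t ∈ [0, δ). Then for every t > 0, ∫_0^t ‖A^δ(s)‖² ds ≤ 2 c₃ e^{16 c₁ t}. -/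

import Mathlib

open Finset Set MeasureTheory

/-- Estimate (4.11) from the proof of Lemma 4.1: the piecewise constant discrete
time-derivative `A^δ` of the implicit Euler iterates satisfies
`∫₀ᵗ ‖A^δ(s)‖² ds ≤ 2c₃ e^{16c₁t}` for every `t > 0`. -/
theorem stmt5 {𝓗 : Type*} [NormedAddCommGroup 𝓗] [InnerProductSpace ℝ 𝓗]
    (c₁ c₃ δ : ℝ) (hc₁ : 0 < c₁) (hc₃ : 0 < c₃) (hδ : 0 < δ)
    (u : ℕ → 𝓗)
    (hest : ∀ n : ℕ,
      (1 / (2 * δ)) * ∑ j ∈ Finset.range (n + 1), ‖u (j + 1) - u j‖ ^ 2 ≤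
        c₃ * Real.exp (16 * c₁ * (n : ℝ) * δ))
    (A : ℝ → 𝓗)
    (hA : ∀ n : ℕ, 1 ≤ n → ∀ t ∈ Ico ((n : ℝ) * δ) (((n : ℝ) + 1) * δ),
      A t = (1 / δ) • (u n - u (n - 1)))
    (hA0 : ∀ t ∈ Ico (0 : ℝ) δ, A t = 0) :
    ∀ t : ℝ, 0 < t →
      (∫ s in (0 : ℝ)..t, ‖A s‖ ^ 2) ≤ 2 * c₃ * Real.exp (16 * c₁ * t) := by
  intro t ht
  set f : ℝ → ℝ := fun s => ‖A s‖ ^ 2 with hf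
  set g : ℕ → ℝ := fun k => if k = 0 then 0 else ‖u k - u (k - 1)‖ ^ 2 / δ ^ 2 with hg
  -- f equals g k on Ico (kδ) ((k+1)δ)
  have hconst : ∀ k : ℕ, ∀ s ∈ Set.Ico ((k : ℝ) * δ) (((k : ℝ) + 1) * δ), f s = g k := by
    intro k s hs
    rcases Nat.eq_zero_or_pos k with h0 | hk
    · subst h0
      have hs' : s ∈ Set.Ico (0 : ℝ) δ := by
        simpa using hs
      simp [hf, hg, hA0 s hs']
    · rw [hf]
      simp only [hA k hk s hs, hg, if_neg (Nat.pos_iff_ne_zero.mp hk)]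
      rw [norm_smul]
      rw [mul_pow]
      have : ‖(1 : ℝ) / δ‖ ^ 2 = 1 / δ ^ 2 := by
        rw [Real.norm_eq_abs, sq_abs]
        field_simp
      rw [this]
      ring
  -- a.e. equality on Ioc
  have haeq : ∀ k : ℕ, f =ᵐ[volume.restrict (Set.Ioc ((k : ℝ) * δ) (((k : ℝ) + 1) * δ))]
      fun _ => g k := by
    intro k
    have hnull : (volume.restrict (Set.Ioc ((k : ℝ) * δ) (((k : ℝ) + 1) * δ)))
        {s | f s = g k}ᶜ = 0 := by
      rw [Measure.restrict_apply' measurableSet_Ioc]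
      refine measure_mono_null (fun x hx => ?_) (measure_singleton ((((k : ℝ) + 1) * δ)))
      rcases hx with ⟨hx1, hx2⟩
      simp only [Set.mem_singleton_iff]
      by_contra hne
      exact hx1 (hconst k x ⟨hx2.1.le, lt_of_le_of_ne hx2.2 hne⟩)
    exact hnull
  have hle : ∀ k : ℕ, (k : ℝ) * δ ≤ ((k : ℝ) + 1) * δ := by
    intro k
    nlinarith [hδ]
  -- integral over each slab
  have hslab : ∀ k : ℕ, IntervalIntegrable f volume ((k : ℝ) * δ) (((k : ℝ) + 1) * δ) ∧
      (∫ s in ((k : ℝ) * δ)..(((k : ℝ) + 1) * δ), f s) = g k * δ := by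
    intro k
    have hint : IntegrableOn (fun _ => g k) (Set.Ioc ((k : ℝ) * δ) (((k : ℝ) + 1) * δ)) volume :=
      (integrableOn_const_iff (C := g k)).mpr (Or.inr measure_Ioc_lt_top)
    have hintf : IntegrableOn f (Set.Ioc ((k : ℝ) * δ) (((k : ℝ) + 1) * δ)) volume :=
      hint.congr_fun_ae (haeq k).symm
    constructor
    · rw [intervalIntegrable_iff, Set.uIoc_of_le (hle k)]
      exact hintf
    · rw [intervalIntegral.integral_of_le (hle k), MeasureTheory.integral_congr_ae (haeq k)]
      rw [setIntegral_const, measureReal_def, Real.volume_Ioc, smul_eq_mul]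
      rw [ENNReal.toReal_ofReal (by nlinarith [hδ] : (0:ℝ) ≤ ((k : ℝ) + 1) * δ - (k : ℝ) * δ)]
      ring_nf
  -- cumulative integral
  have hcum : ∀ n : ℕ, IntervalIntegrable f volume 0 ((n : ℝ) * δ) ∧
      (∫ s in (0 : ℝ)..((n : ℝ) * δ), f s) = ∑ k ∈ Finset.range n, g k * δ := by
    intro n
    induction n with
    | zero => simp
    | succ n ih =>
      have h1 := hslab n
      have hcast : ((n : ℝ) + 1) * δ = ((n + 1 : ℕ) : ℝ) * δ := by push_cast; ring
      constructor
      · rw [← hcast]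
        exact ih.1.trans h1.1
      · rw [← hcast, ← intervalIntegral.integral_add_adjacent_intervals ih.1 h1.1,
          ih.2, h1.2, Finset.sum_range_succ]
  set N : ℕ := ⌈t / δ⌉₊ with hN
  have hN1 : 1 ≤ N := Nat.one_le_ceil_iff.mpr (div_pos ht hδ)
  have htN : t ≤ (N : ℝ) * δ := by
    rw [← div_le_iff₀ hδ]
    exact Nat.le_ceil _
  have hNt : ((N : ℝ) - 1) * δ ≤ t := by
    have h1 := Nat.ceil_lt_add_one (le_of_lt (div_pos ht hδ))
    rw [← hN] at h1
    have h2 : ((N : ℝ) - 1) * δ < (t / δ) * δ :=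
      mul_lt_mul_of_pos_right (by linarith) hδ
    rw [div_mul_cancel₀ _ (ne_of_gt hδ)] at h2
    exact h2.le
  -- monotonicity
  have hmono : (∫ s in (0 : ℝ)..t, f s) ≤ ∫ s in (0 : ℝ)..((N : ℝ) * δ), f s := by
    apply intervalIntegral.integral_mono_interval le_rfl ht.le htN
    · filter_upwards with x
      positivity
    · exact (hcum N).1
  rw [hf] at hmono
  refine le_trans hmono ?_
  rw [(hcum N).2]
  clear_value N
  -- bound the sum
  obtain ⟨M, rfl⟩ : ∃ M, N = M + 1 := ⟨N - 1, (Nat.succ_pred_eq_of_pos hN1).symm⟩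
  rw [Finset.sum_range_succ']
  have hg0 : g 0 * δ = 0 := by simp [hg]
  rw [hg0, add_zero]
  have hterm : ∀ j ∈ Finset.range M, g (j + 1) * δ = ‖u (j + 1) - u j‖ ^ 2 / δ := by
    intro j _
    simp only [hg, Nat.add_one_ne_zero, if_false, Nat.add_sub_cancel]
    field_simp
  rw [Finset.sum_congr rfl hterm]
  have hsum_le : ∑ j ∈ Finset.range M, ‖u (j + 1) - u j‖ ^ 2 / δ ≤
      ∑ j ∈ Finset.range (M + 1), ‖u (j + 1) - u j‖ ^ 2 / δ := by
    apply Finset.sum_le_sum_of_subset_of_nonneg (Finset.range_subset_range.mpr (Nat.le_succ M))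
    intro i _ _
    positivity
  refine le_trans hsum_le ?_
  have h2 : ∑ j ∈ Finset.range (M + 1), ‖u (j + 1) - u j‖ ^ 2 / δ =
      2 * ((1 / (2 * δ)) * ∑ j ∈ Finset.range (M + 1), ‖u (j + 1) - u j‖ ^ 2) := by
    rw [Finset.mul_sum, Finset.mul_sum]
    refine Finset.sum_congr rfl fun j _ => ?_
    field_simp
  rw [h2]
  have h3 := hest M
  have h4 : c₃ * Real.exp (16 * c₁ * (M : ℝ) * δ) ≤ c₃ * Real.exp (16 * c₁ * t) := by
    apply mul_le_mul_of_nonneg_left _ hc₃.le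
    apply Real.exp_le_exp.mpr
    have hMδ : (M : ℝ) * δ ≤ t := by
      have : ((M : ℝ) + 1 - 1) * δ ≤ t := by push_cast at hNt ⊢; linarith
      linarith [this]
    nlinarith [hc₁]
  nlinarith [h3, h4]
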